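/- arXiv:2403.19779 — 3 statements merged into one kernel-verified Lean document; each statement's English description precedes it below -/
import Mathlib

section
/- Let R and S be commutative rings. If the categories of R-modules and S-modules are equivalent as additive categories (i.e. R and S are Morita equivalent), then R and S are isomorphic as rings. -/
open CategoryTheory
set_option synthInstance.maxHeartbeats 1000000
set_option maxHeartbeats 1000000

universe v w

noncomputable section

section CenterIso

variable (R : Type) [CommRing R]

/-- The natural transformation of the identity functor on `ModuleCat R` given by scalar
multiplication by `r`. -/
def smulNatTrans (r : R) : 𝟭 (ModuleCat.{v} R) ⟶ 𝟭 (ModuleCat.{v} R) where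
  app M := ModuleCat.ofHom (LinearMap.lsmul R M r)
  naturality {M N} f := by
    ext x
    exact (f.hom.map_smul r x).symm

@[simp] lemma smulNatTrans_app (r : R) (M : ModuleCat.{v} R) (x : M) :
    (smulNatTrans R r).app M x = r • x := rfl

lemma natTrans_ext {η θ : 𝟭 (ModuleCat.{v} R) ⟶ 𝟭 (ModuleCat.{v} R)}
    (h : ∀ (M : ModuleCat.{v} R) (x : M), η.app M x = θ.app M x) : η = θ :=
  NatTrans.ext (funext fun M => ModuleCat.hom_ext (LinearMap.ext fun x => h M x))

/-- The canonical ring homomorphism from a commutative ring to the endomorphism ring of the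
identity functor of its module category. -/
def toEndIdRingHom : R →+* End (𝟭 (ModuleCat.{v} R)) where
  toFun r := smulNatTrans R r
  map_one' := natTrans_ext R fun M x => one_smul R x
  map_mul' r s := natTrans_ext R fun M x => mul_smul r s x
  map_zero' := natTrans_ext R fun M x => zero_smul R x
  map_add' r s := natTrans_ext R fun M x => by
    show (r + s) • x = ((smulNatTrans R r : End (𝟭 (ModuleCat.{v} R)))
      + smulNatTrans R s).app M x
    rw [NatTrans.app_add]
    simp only [add_smul]
    rfl

lemma endId_eval (η : End (𝟭 (ModuleCat.{v} R))) (M : ModuleCat.{v} R) (x : M) :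
    η.app M x = (η.app (ModuleCat.of R (ULift.{v} R)) (ULift.up 1)).down • x := by
  let f : ModuleCat.of R (ULift.{v} R) ⟶ M :=
    ModuleCat.ofHom ((LinearMap.toSpanSingleton R M x).comp (ULift.moduleEquiv).toLinearMap)
  have hf : ∀ u : ULift.{v} R, f u = u.down • x := fun _ => rfl
  have hnat := η.naturality f
  have h1 : η.app M (f (ULift.up 1)) = f (η.app (ModuleCat.of R (ULift.{v} R)) (ULift.up 1)) := by
    have := ConcreteCategory.congr_hom hnat (ULift.up (1 : R))
    simpa [ConcreteCategory.comp_apply] using this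
  simp only [hf] at h1
  simpa using h1

lemma toEndIdRingHom_bijective : Function.Bijective (toEndIdRingHom.{v} R) := by
  constructor
  · intro r s h
    have h' : smulNatTrans.{v} R r = smulNatTrans R s := h
    have h2 := congrArg (fun η : 𝟭 (ModuleCat.{v} R) ⟶ 𝟭 (ModuleCat.{v} R) =>
      η.app (ModuleCat.of R (ULift.{v} R)) (ULift.up 1)) h'
    simp only [smulNatTrans_app] at h2
    have h3 : r • (ULift.up (1 : R) : ULift.{v} R) = s • ULift.up 1 := h2
    have h4 := congrArg ULift.down h3
    simpa using h4
  · intro η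
    refine ⟨(η.app (ModuleCat.of R (ULift.{v} R)) (ULift.up 1)).down, ?_⟩
    refine natTrans_ext R fun M x => ?_
    rw [endId_eval R η M x]
    rfl

/-- For a commutative ring, `R` is isomorphic to the endomorphism ring of the identity functor
of `ModuleCat R` (the "categorical center"). -/
def ringEquivEndId : R ≃+* End (𝟭 (ModuleCat.{v} R)) :=
  RingEquiv.ofBijective (toEndIdRingHom R) (toEndIdRingHom_bijective R)

end CenterIso

section Transport

variable {C : Type*} {D : Type*} [Category C] [Category D]

/-- Transport an endomorphism of the identity functor along an equivalence. -/
def transportEndId (e : C ≌ D) (η : End (𝟭 C)) : End (𝟭 D) :=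
  { app := fun Y => e.counitInv.app Y ≫ e.functor.map (η.app (e.inverse.obj Y)) ≫
      e.counit.app Y
    naturality := by
      intro Y Y' f
      simp only [Functor.id_obj, Functor.id_map]
      have h1 : f ≫ e.counitInv.app Y' = e.counitInv.app Y ≫
          e.functor.map (e.inverse.map f) := by
        simpa using (e.counitInv.naturality f)
      have h2 : e.inverse.map f ≫ η.app (e.inverse.obj Y') =
          η.app (e.inverse.obj Y) ≫ e.inverse.map f := by
        simpa using η.naturality (e.inverse.map f)
      have h3 : e.functor.map (e.inverse.map f) ≫ e.counit.app Y' =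
          e.counit.app Y ≫ f := by
        simpa using e.counit.naturality f
      rw [reassoc_of% h1, ← Functor.map_comp_assoc, h2, Functor.map_comp_assoc, h3]
      simp }

@[simp] lemma transportEndId_app (e : C ≌ D) (η : End (𝟭 C)) (Y : D) :
    (transportEndId e η).app Y = e.counitInv.app Y ≫
      e.functor.map (η.app (e.inverse.obj Y)) ≫ e.counit.app Y := rfl

lemma transportEndId_symm_apply (e : C ≌ D) (η : End (𝟭 C)) :
    transportEndId e.symm (transportEndId e η) = η := by
  refine NatTrans.ext (funext fun X => ?_)
  show e.unit.app X ≫ e.inverse.map ((transportEndId e η).app (e.functor.obj X)) ≫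
      e.unitInv.app X = η.app X
  simp only [transportEndId_app, Functor.map_comp]
  rw [← e.unit_app_inverse (e.functor.obj X), ← e.unitInv_app_inverse (e.functor.obj X)]
  have h1 : e.unit.app (e.inverse.obj (e.functor.obj X)) ≫
      e.inverse.map (e.functor.map (η.app (e.inverse.obj (e.functor.obj X)))) =
      η.app (e.inverse.obj (e.functor.obj X)) ≫
        e.unit.app (e.inverse.obj (e.functor.obj X)) := by
    simpa using (e.unit.naturality (η.app (e.inverse.obj (e.functor.obj X)))).symm
  rw [reassoc_of% h1]
  have h2 : e.unit.app X ≫ η.app (e.inverse.obj (e.functor.obj X)) =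
      η.app X ≫ e.unit.app X := by
    simpa using η.naturality (e.unit.app X)
  have h3 : e.unit.app (e.inverse.obj (e.functor.obj X)) ≫
      e.unitInv.app (e.inverse.obj (e.functor.obj X)) = 𝟙 _ := e.unitIso.hom_inv_id_app _
  have h4 : e.unit.app X ≫ e.unitInv.app X = 𝟙 _ := e.unitIso.hom_inv_id_app _
  simp only [Category.assoc]
  rw [reassoc_of% h3, reassoc_of% h2, h4]
  simp

/-- Transporting endomorphisms of the identity functor along an additive equivalence is a
ring homomorphism. -/
def transportEndIdRingHom [Preadditive C] [Preadditive D] (e : C ≌ D)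
    [e.functor.Additive] : End (𝟭 C) →+* End (𝟭 D) where
  toFun := transportEndId e
  map_one' := by
    refine NatTrans.ext (funext fun Y => ?_)
    show (transportEndId e 1).app Y = (1 : End (𝟭 D)).app Y
    simp [End.one_def, transportEndId_app]
  map_mul' η θ := by
    refine NatTrans.ext (funext fun Y => ?_)
    show (transportEndId e (θ ≫ η)).app Y =
      ((transportEndId e θ) ≫ (transportEndId e η)).app Y
    simp only [transportEndId_app, NatTrans.comp_app, Functor.map_comp, Category.assoc,
      Iso.hom_inv_id_app_assoc]
  map_zero' := by
    refine NatTrans.ext (funext fun Y => ?_)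
    show (transportEndId e 0).app Y = (0 : End (𝟭 D)).app Y
    simp [transportEndId_app]
  map_add' η θ := by
    refine NatTrans.ext (funext fun Y => ?_)
    show (transportEndId e (η + θ)).app Y =
      ((transportEndId e η : End (𝟭 D)) + transportEndId e θ).app Y
    rw [NatTrans.app_add]
    have happ : (η + θ).app (e.inverse.obj Y) =
        η.app (e.inverse.obj Y) + θ.app (e.inverse.obj Y) := rfl
    simp only [transportEndId_app, happ, Functor.map_add,
      Preadditive.comp_add, Preadditive.add_comp]

end Transport

end

/-- Morita equivalent commutative rings are isomorphic: if `R` and `S` are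
commutative rings whose module categories are equivalent via an additive equivalence, then
`R ≅ S` as rings. -/
theorem commRing_morita_equiv_iso
    (R S : Type) [CommRing R] [CommRing S]
    (e : ModuleCat R ≌ ModuleCat S) [e.functor.Additive] :
    Nonempty (R ≃+* S) := by
  haveI : e.symm.functor.Additive := (inferInstance : e.inverse.Additive)
  refine ⟨(ringEquivEndId R).trans (RingEquiv.trans ?_ (ringEquivEndId S).symm)⟩
  refine RingEquiv.ofRingHom (transportEndIdRingHom e) (transportEndIdRingHom e.symm) ?_ ?_
  · refine RingHom.ext fun η => ?_
    show transportEndId e (transportEndId e.symm η) = η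
    exact transportEndId_symm_apply e.symm η
  · refine RingHom.ext fun η => ?_
    exact transportEndId_symm_apply e η
end

section
/- Let R and S be rings, M an (R,S)-bimodule and N an (S,R)-bimodule such that M ⊗_S N ≅ R as (R,R)-bimodules and N ⊗_R M ≅ S as (S,S)-bimodules. Then the functor (− ⊗_R M) : ModuleCat R → ModuleCat S is an equivalence of categories. -/
open CategoryTheory CategoryTheory.Limits CategoryTheory.MonoidalCategory

/- A ring is precisely a monoid object in the category of abelian groups
(`ModuleCat ℤ`), a right `R`-module is precisely a bimodule object
`Bimod (Mon.trivial _) R`, and the tensor product of bimodules over the middle ring is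
`Bimod.tensorBimod`. -/

noncomputable instance (X : ModuleCat.{0} ℤ) :
    PreservesColimitsOfSize.{0, 0} (tensorRight X) :=
  preservesColimits_of_natIso
    (F := tensorLeft X)
    (NatIso.ofComponents (fun Y => β_ X Y) (by
      intro Y Z f
      simp))

/-- The functor `(− ⊗_R M) : ModuleCat R ⥤ ModuleCat S` induced by an `(R,S)`-bimodule `M`,
where right `R`-modules are presented as bimodule objects `Bimod (Mon.trivial _) R` internal
to the category of abelian groups. -/
noncomputable def tensorRightBimodFunctor {R S : Mon (ModuleCat.{0} ℤ)} (M : Bimod R S) :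
    Bimod (Mon.trivial (ModuleCat.{0} ℤ)) R ⥤ Bimod (Mon.trivial (ModuleCat.{0} ℤ)) S where
  obj X := X.tensorBimod M
  map f := Bimod.whiskerRight f M
  map_id _ := Bimod.id_whiskerRight_bimod
  map_comp f g := Bimod.comp_whiskerRight_bimod f g M

/-- Let `R` and `S` be rings (monoid objects in abelian groups), `M` an
`(R,S)`-bimodule and `N` an `(S,R)`-bimodule such that `M ⊗_S N ≅ R` as `(R,R)`-bimodules
and `N ⊗_R M ≅ S` as `(S,S)`-bimodules.  Then the functor
`(− ⊗_R M) : ModuleCat R ⥤ ModuleCat S` is an equivalence of categories. -/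
theorem tensorRightBimodFunctor_isEquivalence
    (R S : Mon (ModuleCat.{0} ℤ)) (M : Bimod R S) (N : Bimod S R)
    (h₁ : M.tensorBimod N ≅ Bimod.regular R)
    (h₂ : N.tensorBimod M ≅ Bimod.regular S) :
    (tensorRightBimodFunctor M).IsEquivalence := by
  letI : Bicategory (Mon (ModuleCat.{0} ℤ)) := Bimod.monBicategory
  let T := Mon.trivial (ModuleCat.{0} ℤ)
  let F : Bimod T R ⥤ Bimod T S := Bicategory.postcomp T M
  let G : Bimod T S ⥤ Bimod T R := Bicategory.postcomp T N
  have hF : tensorRightBimodFunctor M = F := rfl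
  rw [hF]
  exact Functor.IsEquivalence.mk' G
    (Bicategory.associatorNatIsoLeft T M N ≪≫
      (Bicategory.postcomposing T R R).mapIso h₁ ≪≫ Bicategory.rightUnitorNatIso T R).symm
    (Bicategory.associatorNatIsoLeft T N M ≪≫
      (Bicategory.postcomposing T S S).mapIso h₂ ≪≫ Bicategory.rightUnitorNatIso T S)
end

section
/- Consider the function q : (ℤ/4 × ℤ/4) → ℂˣ defined by q(a,b) = i^{a·b} (lifting a, b to integers; this is well-defined since i⁴ = 1). There are exactly three subgroups L of ℤ/4 × ℤ/4 of order 4 on which q is identically 1, namely ℤ/4 × {0}, {0} × ℤ/4, and the subgroup {(0,0), (2,0), (0,2), (2,2)}. -/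
open AddSubgroup

private theorem ordI : orderOf Complex.I = 4 := by
  have := orderOf_eq_prime_pow (x := Complex.I) (p := 2) (n := 1) ?_ ?_
  · simpa using this
  · norm_num [Complex.ext_iff]
  · simpa [pow_succ] using Complex.I_pow_four

private theorem cond_iff (x : ZMod 4 × ZMod 4) :
    (Complex.I ^ (x.1.val * x.2.val)) = 1 ↔ (x.1 = 0 ∨ x.2 = 0 ∨ x = (2, 2)) := by
  rw [← orderOf_dvd_iff_pow_eq_one, ordI]
  revert x; decide

private theorem mem_zm2 (x : ZMod 4) : x ∈ zmultiples (2 : ZMod 4) ↔ x = 0 ∨ x = 2 := by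
  constructor
  · rintro ⟨k, rfl⟩
    have h : ∀ c : ZMod 4, c * 2 = 0 ∨ c * 2 = 2 := by decide
    simpa [zsmul_eq_mul] using h (k : ZMod 4)
  · rintro (rfl | rfl)
    · exact ⟨0, by simp⟩
    · exact ⟨1, by simp⟩

private theorem card_prod (H K : AddSubgroup (ZMod 4)) :
    Nat.card (H.prod K) = Nat.card H * Nat.card K := by
  rw [Nat.card_congr (AddSubgroup.prodEquiv H K).toEquiv, Nat.card_prod]

private theorem cardA : Nat.card ((⊤ : AddSubgroup (ZMod 4)).prod (⊥ : AddSubgroup (ZMod 4))) = 4 := by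
  rw [card_prod, AddSubgroup.card_top, AddSubgroup.card_bot]
  simp [Nat.card_eq_fintype_card]

private theorem cardB : Nat.card ((⊥ : AddSubgroup (ZMod 4)).prod (⊤ : AddSubgroup (ZMod 4))) = 4 := by
  rw [card_prod, AddSubgroup.card_top, AddSubgroup.card_bot]
  simp [Nat.card_eq_fintype_card]

private theorem card_zm2 : Nat.card (zmultiples (2 : ZMod 4)) = 2 := by
  rw [Nat.card_zmultiples]
  exact addOrderOf_eq_prime (by decide) (by decide)

private theorem cardV : Nat.card ((zmultiples (2 : ZMod 4)).prod (zmultiples (2 : ZMod 4))) = 4 := by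
  rw [card_prod, card_zm2]

/-- For the quadratic form `q (a, b) = i ^ (a·b)` on `ℤ/4 × ℤ/4`
(lifting `a`, `b` to integers via `ZMod.val`; well-defined since `i ^ 4 = 1`), there are
exactly three subgroups `L` of order 4 on which `q` is identically `1`:
`ℤ/4 × {0}`, `{0} × ℤ/4`, and `{(0,0), (2,0), (0,2), (2,2)}`. -/
theorem z4_double_lagrangian_subgroups :
    {L : AddSubgroup (ZMod 4 × ZMod 4) |
        Nat.card L = 4 ∧ ∀ x ∈ L, (Complex.I ^ (x.1.val * x.2.val)) = 1}
      = {(⊤ : AddSubgroup (ZMod 4)).prod (⊥ : AddSubgroup (ZMod 4)),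
          (⊥ : AddSubgroup (ZMod 4)).prod (⊤ : AddSubgroup (ZMod 4)),
          (AddSubgroup.zmultiples (2 : ZMod 4)).prod
            (AddSubgroup.zmultiples (2 : ZMod 4))} := by
  ext L
  simp only [Set.mem_setOf_eq, Set.mem_insert_iff, Set.mem_singleton_iff]
  constructor
  · rintro ⟨hcard, hq⟩
    -- every element of L satisfies the membership condition
    have hmem : ∀ x ∈ L, x.1 = 0 ∨ x.2 = 0 ∨ x = (2, 2) := fun x hx =>
      (cond_iff x).mp (hq x hx)
    by_cases h1 : ((1 : ZMod 4), (0 : ZMod 4)) ∈ L ∨ ((3 : ZMod 4), (0 : ZMod 4)) ∈ L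
    · left
      -- then (1,0) ∈ L
      have h10 : ((1 : ZMod 4), (0 : ZMod 4)) ∈ L := by
        rcases h1 with h | h
        · exact h
        · have := L.neg_mem h
          rwa [show (-((3 : ZMod 4), (0 : ZMod 4))) = (1, 0) from by decide] at this
      have hle : (⊤ : AddSubgroup (ZMod 4)).prod (⊥ : AddSubgroup (ZMod 4)) ≤ L := by
        rintro ⟨a, b⟩ hab
        simp only [AddSubgroup.mem_prod, AddSubgroup.mem_top, AddSubgroup.mem_bot,
          true_and] at hab
        subst hab
        have : a.val • ((1 : ZMod 4), (0 : ZMod 4)) = (a, (0 : ZMod 4)) := by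
          ext
          · simpa using ZMod.natCast_rightInverse a
          · simp
        rw [← this]
        exact AddSubmonoid.nsmul_mem L.toAddSubmonoid h10 a.val
      exact ((AddSubgroup.eq_of_le_of_card_ge hle (by rw [hcard, cardA])).symm)
    · by_cases h2 : ((0 : ZMod 4), (1 : ZMod 4)) ∈ L ∨ ((0 : ZMod 4), (3 : ZMod 4)) ∈ L
      · right; left
        have h01 : ((0 : ZMod 4), (1 : ZMod 4)) ∈ L := by
          rcases h2 with h | h
          · exact h
          · have := L.neg_mem h
            rwa [show (-((0 : ZMod 4), (3 : ZMod 4))) = (0, 1) from by decide] at this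
        have hle : (⊥ : AddSubgroup (ZMod 4)).prod (⊤ : AddSubgroup (ZMod 4)) ≤ L := by
          rintro ⟨a, b⟩ hab
          simp only [AddSubgroup.mem_prod, AddSubgroup.mem_top, AddSubgroup.mem_bot,
            and_true] at hab
          subst hab
          have : b.val • ((0 : ZMod 4), (1 : ZMod 4)) = ((0 : ZMod 4), b) := by
            ext
            · simp
            · simpa using ZMod.natCast_rightInverse b
          rw [← this]
          exact AddSubmonoid.nsmul_mem L.toAddSubmonoid h01 b.val
        exact ((AddSubgroup.eq_of_le_of_card_ge hle (by rw [hcard, cardB])).symm)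
      · right; right
        push_neg at h1 h2
        have hle : L ≤ (zmultiples (2 : ZMod 4)).prod (zmultiples (2 : ZMod 4)) := by
          rintro ⟨a, b⟩ hab
          simp only [AddSubgroup.mem_prod, mem_zm2]
          have hc := hmem _ hab
          have key : ∀ a b : ZMod 4, (a = 0 ∨ b = 0 ∨ ((a : ZMod 4), (b : ZMod 4)) = (2, 2)) →
              ((a, b) = ((1 : ZMod 4), 0) ∨ (a, b) = ((3 : ZMod 4), 0) ∨
              (a, b) = ((0 : ZMod 4), 1) ∨ (a, b) = ((0 : ZMod 4), 3)) ∨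
              ((a = 0 ∨ a = 2) ∧ (b = 0 ∨ b = 2)) := by decide
          rcases key a b hc with (h | h | h | h) | hk
          · rw [h] at hab; exact absurd hab h1.1
          · rw [h] at hab; exact absurd hab h1.2
          · rw [h] at hab; exact absurd hab h2.1
          · rw [h] at hab; exact absurd hab h2.2
          · exact hk
        exact AddSubgroup.eq_of_le_of_card_ge hle (by rw [hcard, cardV])
  · rintro (rfl | rfl | rfl)
    · refine ⟨cardA, fun x hx => ?_⟩
      simp only [AddSubgroup.mem_prod, AddSubgroup.mem_bot] at hx
      rw [hx.2]
      simp
    · refine ⟨cardB, fun x hx => ?_⟩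
      simp only [AddSubgroup.mem_prod, AddSubgroup.mem_bot] at hx
      rw [hx.1]
      simp
    · refine ⟨cardV, fun x hx => ?_⟩
      simp only [AddSubgroup.mem_prod, mem_zm2] at hx
      rw [cond_iff]
      obtain ⟨h1 | h1, h2 | h2⟩ := hx
      · exact Or.inl h1
      · exact Or.inl h1
      · exact Or.inr (Or.inl h2)
      · right; right; ext <;> simp [h1, h2]
end
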